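/- Let A be a symmetric positive semidefinite n×n real matrix with eigenvalues α₁ ≥ α₂ ≥ ⋯ ≥ αₙ ≥ 0 and a corresponding orthonormal system of eigenvectors w₁, …, wₙ (A wᵢ = αᵢ wᵢ). Then for m ≤ n, the matrix B = α₁ w₁w₁ᵀ + ⋯ + α_m w_m w_mᵀ has rank at most m and satisfies ‖A − B‖_F² = α_{m+1}² + ⋯ + αₙ², so B attains the minimum of ‖A − B‖_F² over matrices of rank at most m. -/

import Mathlib

open Matrix

namespace EYhelp

variable {n : ℕ}

lemma tr_sq_nonneg (M : Matrix (Fin n) (Fin n) ℝ) : 0 ≤ trace (Mᵀ * M) := by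
  simp only [trace, diag_apply, mul_apply, transpose_apply]
  exact Finset.sum_nonneg fun i _ => Finset.sum_nonneg fun j _ => mul_self_nonneg _

lemma vmv_mulVec (u v x : Fin n → ℝ) : vecMulVec u v *ᵥ x = (v ⬝ᵥ x) • u := by
  ext i; simp [vecMulVec, mulVec, dotProduct, Finset.mul_sum, Finset.sum_mul]
  exact Finset.sum_congr rfl fun j _ => by ring

lemma trace_vmv (u v x y : Fin n → ℝ) :
    trace ((vecMulVec u v)ᵀ * vecMulVec x y) = (u ⬝ᵥ x) * (v ⬝ᵥ y) := by
  simp only [trace, diag_apply, mul_apply, transpose_apply, vecMulVec_apply, dotProduct,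
    Finset.sum_mul, Finset.mul_sum]
  exact Finset.sum_congr rfl fun i _ => Finset.sum_congr rfl fun j _ => by ring

lemma sum_mulVec' {k : ℕ} (M : Fin k → Matrix (Fin n) (Fin n) ℝ) (v : Fin n → ℝ) :
    (∑ i, M i) *ᵥ v = ∑ i, M i *ᵥ v := by
  ext a
  simp only [mulVec, dotProduct, Matrix.sum_apply, Finset.sum_apply, Finset.sum_mul]
  exact Finset.sum_comm

lemma dotProduct_sum' {k : ℕ} (v : Fin n → ℝ) (f : Fin k → Fin n → ℝ) :
    v ⬝ᵥ (∑ j, f j) = ∑ j, v ⬝ᵥ f j := by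
  simp only [dotProduct, Finset.sum_apply, Finset.mul_sum]
  exact Finset.sum_comm

lemma sum_dotProduct' {k : ℕ} (v : Fin n → ℝ) (f : Fin k → Fin n → ℝ) :
    (∑ j, f j) ⬝ᵥ v = ∑ j, f j ⬝ᵥ v := by
  rw [dotProduct_comm, dotProduct_sum']
  exact Finset.sum_congr rfl fun j _ => dotProduct_comm _ _

lemma trace_lower {k : ℕ} (M : Matrix (Fin n) (Fin n) ℝ) (x : Fin k → Fin n → ℝ)
    (hx : ∀ i j, x i ⬝ᵥ x j = if i = j then (1:ℝ) else 0) :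
    ∑ j, (M *ᵥ x j) ⬝ᵥ (M *ᵥ x j) ≤ trace (Mᵀ * M) := by
  classical
  set X : Matrix (Fin k) (Fin n) ℝ := Matrix.of x with hX
  have hXXt : X * Xᵀ = 1 := by
    ext i j; simpa [X, mul_apply, one_apply, dotProduct] using hx i j
  set P : Matrix (Fin n) (Fin n) ℝ := Xᵀ * X with hP
  have hP2 : P * P = P := by
    rw [hP, Matrix.mul_assoc, ← Matrix.mul_assoc X, hXXt, Matrix.one_mul]
  have hPt : Pᵀ = P := by rw [hP, transpose_mul, transpose_transpose]
  have h1 : ∑ j, (M *ᵥ x j) ⬝ᵥ (M *ᵥ x j) = trace ((X * Mᵀ) * (M * Xᵀ)) := by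
    rw [trace]
    refine Finset.sum_congr rfl fun j _ => ?_
    simp only [diag_apply, mul_apply, transpose_apply, dotProduct, mulVec, dotProduct, X, of_apply]
    refine Finset.sum_congr rfl fun a _ => ?_
    simp only [Finset.sum_mul, Finset.mul_sum]
    exact Finset.sum_congr rfl fun b _ => Finset.sum_congr rfl fun c _ => by ring
  have h2 : trace ((X * Mᵀ) * (M * Xᵀ)) = trace ((Mᵀ * M) * P) := by
    rw [trace_mul_comm, hP]
    conv_rhs => rw [trace_mul_comm]
    simp only [Matrix.mul_assoc]
    rw [trace_mul_comm]
    simp only [Matrix.mul_assoc]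
  have hQ : (1 - P) * (1 - P) = 1 - P := by
    rw [Matrix.mul_sub, Matrix.mul_one, Matrix.sub_mul, Matrix.one_mul, hP2]
    abel
  have h3 : trace ((M * (1 - P))ᵀ * (M * (1 - P))) = trace (Mᵀ * M) - trace ((Mᵀ * M) * P) := by
    rw [transpose_mul, transpose_sub, transpose_one, hPt, Matrix.mul_assoc, trace_mul_comm]
    simp only [Matrix.mul_assoc]
    rw [hQ, Matrix.mul_sub M 1 P, Matrix.mul_one, Matrix.mul_sub Mᵀ, trace_sub,
      ← Matrix.mul_assoc]
  have := tr_sq_nonneg (M * (1 - P))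
  rw [h1, h2]
  linarith

lemma dp_self_nonneg (v : Fin n → ℝ) : 0 ≤ v ⬝ᵥ v :=
  Finset.sum_nonneg fun i _ => mul_self_nonneg _

lemma bessel {k : ℕ} (x : Fin k → Fin n → ℝ)
    (hx : ∀ i j, x i ⬝ᵥ x j = if i = j then (1:ℝ) else 0) (v : Fin n → ℝ) :
    ∑ j, (v ⬝ᵥ x j) ^ 2 ≤ v ⬝ᵥ v := by
  classical
  set u : Fin n → ℝ := ∑ j, (v ⬝ᵥ x j) • x j with hu
  have huv : v ⬝ᵥ u = ∑ j, (v ⬝ᵥ x j) ^ 2 := by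
    rw [hu, dotProduct_sum']
    exact Finset.sum_congr rfl fun j _ => by rw [dotProduct_smul, pow_two, smul_eq_mul]
  have hvu : u ⬝ᵥ v = ∑ j, (v ⬝ᵥ x j) ^ 2 := by rw [dotProduct_comm]; exact huv
  have huu : u ⬝ᵥ u = ∑ j, (v ⬝ᵥ x j) ^ 2 := by
    rw [hu, sum_dotProduct']
    refine Finset.sum_congr rfl fun j _ => ?_
    rw [smul_dotProduct, dotProduct_sum', smul_eq_mul]
    rw [Finset.sum_congr rfl fun l _ => by rw [dotProduct_smul, hx j l, smul_eq_mul]]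
    simp [pow_two]
  have h0 : 0 ≤ (v - u) ⬝ᵥ (v - u) := dp_self_nonneg _
  rw [sub_dotProduct, dotProduct_sub, dotProduct_sub, huv, hvu, huu] at h0
  linarith

lemma parseval (w : Fin n → Fin n → ℝ)
    (hcol : ∀ l r, ∑ i, w i l * w i r = if l = r then (1:ℝ) else 0) (v : Fin n → ℝ) :
    ∑ i, (w i ⬝ᵥ v) ^ 2 = v ⬝ᵥ v := by
  classical
  calc ∑ i, (w i ⬝ᵥ v) ^ 2 = ∑ i, ∑ l, ∑ r, (w i l * v l) * (w i r * v r) := by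
        refine Finset.sum_congr rfl fun i _ => ?_
        rw [pow_two, dotProduct, Finset.sum_mul_sum]
    _ = ∑ l, ∑ r, (v l * v r) * ∑ i, w i l * w i r := by
        rw [Finset.sum_comm]
        refine Finset.sum_congr rfl fun l _ => ?_
        rw [Finset.sum_comm]
        refine Finset.sum_congr rfl fun r _ => ?_
        rw [Finset.mul_sum]
        exact Finset.sum_congr rfl fun i _ => by ring
    _ = v ⬝ᵥ v := by
        rw [Finset.sum_congr rfl fun l _ => Finset.sum_congr rfl fun r _ => by rw [hcol l r]]
        simp [dotProduct, Finset.mul_sum, mul_ite]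

lemma dp_expand (w : Fin n → Fin n → ℝ)
    (hortho : ∀ i j, w i ⬝ᵥ w j = if i = j then (1:ℝ) else 0) (a b : Fin n → ℝ) :
    (∑ i, a i • w i) ⬝ᵥ (∑ i, b i • w i) = ∑ i, a i * b i := by
  rw [sum_dotProduct']
  refine Finset.sum_congr rfl fun i _ => ?_
  rw [smul_dotProduct, dotProduct_sum']
  rw [Finset.sum_congr rfl fun l _ => by rw [dotProduct_smul, hortho i l, smul_eq_mul]]
  simp

lemma filter_lt_eq_image {m : ℕ} (hmn : m ≤ n) :
    (Finset.univ.filter fun i : Fin n => (i : ℕ) < m) =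
      Finset.univ.image (Fin.castLE hmn) := by
  ext a
  simp only [Finset.mem_filter, Finset.mem_image, Finset.mem_univ, true_and]
  constructor
  · intro h; exact ⟨⟨a, h⟩, rfl⟩
  · rintro ⟨b, rfl⟩; exact b.2

lemma card_filter_lt {m : ℕ} (hmn : m ≤ n) :
    (Finset.univ.filter fun i : Fin n => (i : ℕ) < m).card = m := by
  rw [filter_lt_eq_image hmn, Finset.card_image_of_injective _ (Fin.castLE_injective hmn),
    Finset.card_univ, Fintype.card_fin]

lemma card_filter_ge {m : ℕ} (hmn : m ≤ n) :
    (Finset.univ.filter fun i : Fin n => m ≤ (i : ℕ)).card = n - m := by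
  classical
  have h := Finset.card_filter_add_card_filter_not
    (s := (Finset.univ : Finset (Fin n))) (p := fun i : Fin n => (i : ℕ) < m)
  simp only [not_lt] at h
  rw [card_filter_lt hmn] at h
  simp only [Finset.card_univ, Fintype.card_fin] at h
  omega

lemma majorize {m : ℕ} (hmn : m ≤ n) (β : Fin n → ℝ) (hβ : Antitone β) (hβ0 : ∀ i, 0 ≤ β i)
    (c : Fin n → ℝ) (hc0 : ∀ i, 0 ≤ c i) (hc1 : ∀ i, c i ≤ 1)
    (hsum : ∑ i, c i = (n - m : ℕ)) :
    ∑ i ∈ Finset.univ.filter (fun i : Fin n => m ≤ (i : ℕ)), β i ≤ ∑ i, β i * c i := by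
  classical
  rcases lt_or_ge m n with hm | hm
  · set t := β ⟨m, hm⟩ with ht
    set S := Finset.univ.filter (fun i : Fin n => m ≤ (i : ℕ)) with hS
    set Sc := Finset.univ.filter (fun i : Fin n => ¬ m ≤ (i : ℕ)) with hSc
    have hsplit : ∀ f : Fin n → ℝ, ∑ i ∈ S, f i + ∑ i ∈ Sc, f i = ∑ i, f i := fun f =>
      Finset.sum_filter_add_sum_filter_not Finset.univ _ f
    have hcardS : S.card = n - m := card_filter_ge hmn
    have h1 : ∑ i ∈ Sc, t * c i ≤ ∑ i ∈ Sc, β i * c i := by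
      refine Finset.sum_le_sum fun i hi => ?_
      have him : (i : ℕ) < m := by simpa [hSc, not_le] using hi
      have : t ≤ β i := hβ (by simpa [Fin.le_def] using him.le)
      exact mul_le_mul_of_nonneg_right this (hc0 i)
    have h2 : ∑ i ∈ S, β i ≤ ∑ i ∈ S, (β i * c i + t * (1 - c i)) := by
      refine Finset.sum_le_sum fun i hi => ?_
      have him : m ≤ (i : ℕ) := by simpa [hS] using hi
      have hβle : β i ≤ t := hβ (by simpa [Fin.le_def] using him)
      nlinarith [hc1 i, hc0 i, hβ0 i]
    have h3 : ∑ i ∈ S, (β i * c i + t * (1 - c i))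
        = ∑ i ∈ S, β i * c i + t * ((n - m : ℕ) - ∑ i ∈ S, c i) := by
      rw [Finset.sum_add_distrib, ← Finset.mul_sum, Finset.sum_sub_distrib,
        Finset.sum_const, nsmul_eq_mul, hcardS, mul_one]
    have h4 : ∑ i ∈ Sc, c i = (n - m : ℕ) - ∑ i ∈ S, c i := by
      have := hsplit c; rw [hsum] at this; linarith
    have h5 := hsplit (fun i => β i * c i)
    rw [← Finset.mul_sum, h4] at h1
    linarith
  · have hempty : (Finset.univ.filter fun i : Fin n => m ≤ (i : ℕ)) = ∅ := by
      ext i; simp only [Finset.mem_filter, Finset.mem_univ, true_and, Finset.notMem_empty,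
        iff_false, not_le]
      exact lt_of_lt_of_le i.2 hm
    rw [hempty, Finset.sum_empty]
    exact Finset.sum_nonneg fun i _ => mul_nonneg (hβ0 i) (hc0 i)

lemma exists_ker {m : ℕ} (hmn : m ≤ n) (C : Matrix (Fin n) (Fin n) ℝ) (hC : C.rank ≤ m) :
    ∃ x : Fin (n - m) → (Fin n → ℝ),
      (∀ i j, x i ⬝ᵥ x j = if i = j then (1:ℝ) else 0) ∧ (∀ j, C *ᵥ x j = 0) := by
  classical
  set L := Matrix.toEuclideanLin C with hL
  set U : Submodule ℝ (EuclideanSpace ℝ (Fin n)) := LinearMap.ker L with hU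
  have hrange : Module.finrank ℝ (LinearMap.range L) = C.rank := by
    have hcomp : L = ((WithLp.linearEquiv 2 ℝ (Fin n → ℝ)).symm.toLinearMap).comp
        ((C.mulVecLin).comp (WithLp.linearEquiv 2 ℝ (Fin n → ℝ)).toLinearMap) := by
      ext v; rfl
    rw [hcomp, LinearMap.range_comp, LinearMap.range_comp_of_range_eq_top,
      LinearEquiv.finrank_map_eq]
    · rfl
    · rw [LinearMap.range_eq_top]; exact (WithLp.linearEquiv 2 ℝ (Fin n → ℝ)).surjective
  have hdim : n - m ≤ Module.finrank ℝ U := by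
    have h1 := LinearMap.finrank_range_add_finrank_ker L
    have h2 : Module.finrank ℝ (EuclideanSpace ℝ (Fin n)) = n := by simp
    rw [hU]; omega
  let b := stdOrthonormalBasis ℝ U
  refine ⟨fun j => WithLp.equiv 2 (Fin n → ℝ) ((b (Fin.castLE hdim j) : EuclideanSpace ℝ (Fin n))),
    ?_, ?_⟩
  · intro i j
    have h := orthonormal_iff_ite.mp b.orthonormal (Fin.castLE hdim i) (Fin.castLE hdim j)
    rw [Submodule.coe_inner, EuclideanSpace.inner_eq_star_dotProduct] at h
    simp only [star_trivial] at h
    rw [dotProduct_comm] at h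
    rw [show ((if i = j then (1:ℝ) else 0) = if Fin.castLE hdim i = Fin.castLE hdim j then 1 else 0)
      by simp [Fin.castLE_inj]]
    exact h
  · intro j
    have hker : L ((b (Fin.castLE hdim j) : EuclideanSpace ℝ (Fin n))) = 0 :=
      (b (Fin.castLE hdim j)).2
    rw [hL, Matrix.toEuclideanLin_apply] at hker
    have := congrArg (WithLp.equiv 2 (Fin n → ℝ)) hker
    simpa using this

end EYhelp

/-- Attainment in the Eckart–Young type theorem (Rao): if `A` is symmetric positive
semidefinite with eigenvalues `α 0 ≥ ⋯ ≥ α (n-1) ≥ 0` and corresponding orthonormal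
eigenvectors `w i`, then `B = ∑_{i < m} α i • w i w iᵀ` has rank at most `m`, satisfies
`‖A − B‖_F² = tr((A−B)ᵀ(A−B)) = ∑_{i ≥ m} (α i)²`, and attains the minimum of
`‖A − C‖_F²` over matrices `C` of rank at most `m`. -/
theorem stmt_5 {n m : ℕ} (hmn : m ≤ n)
    (A : Matrix (Fin n) (Fin n) ℝ) (hA : A.PosSemidef)
    (α : Fin n → ℝ) (hα : Antitone α)
    (w : Fin n → Fin n → ℝ)
    (hortho : ∀ i j, w i ⬝ᵥ w j = if i = j then (1 : ℝ) else 0)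
    (heig : ∀ i, A *ᵥ w i = α i • w i)
    (B : Matrix (Fin n) (Fin n) ℝ)
    (hB : B = ∑ i ∈ Finset.univ.filter (fun i : Fin n => (i : ℕ) < m),
      α i • Matrix.vecMulVec (w i) (w i)) :
    B.rank ≤ m ∧
      Matrix.trace ((A - B)ᵀ * (A - B)) =
        ∑ i ∈ Finset.univ.filter (fun i : Fin n => m ≤ (i : ℕ)), (α i) ^ 2 ∧
      ∀ C : Matrix (Fin n) (Fin n) ℝ, C.rank ≤ m →
        Matrix.trace ((A - B)ᵀ * (A - B)) ≤ Matrix.trace ((A - C)ᵀ * (A - C)) := by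
  classical
  set W : Matrix (Fin n) (Fin n) ℝ := Matrix.of w with hW
  have hWWt : W * Wᵀ = 1 := by
    ext i j
    simpa [W, mul_apply, one_apply, dotProduct] using hortho i j
  have hWtW : Wᵀ * W = 1 := mul_eq_one_comm.mp hWWt
  -- spectral decomposition
  have hspec : A = ∑ i, α i • vecMulVec (w i) (w i) := by
    calc A = A * (Wᵀ * W) := by rw [hWtW, mul_one]
    _ = ∑ i, α i • vecMulVec (w i) (w i) := by
        ext j k
        have h1 : ∀ i : Fin n, (∑ l, A j l * Wᵀ l i) = α i * w i j := by
          intro i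
          have := congrFun (heig i) j
          simpa [mul_apply, mulVec, dotProduct, W, mul_comm] using this
        rw [← Matrix.mul_assoc]
        simp only [mul_apply, Matrix.sum_apply, Matrix.smul_apply, vecMulVec_apply, smul_eq_mul]
        exact Finset.sum_congr rfl fun i _ => by rw [h1 i]; simp [W]; ring
  have hAmB : A - B = ∑ i ∈ Finset.univ.filter (fun i : Fin n => m ≤ (i : ℕ)),
      α i • vecMulVec (w i) (w i) := by
    rw [hspec, hB, ← Finset.sum_filter_add_sum_filter_not Finset.univ
      (fun i : Fin n => (i : ℕ) < m) (fun i => α i • vecMulVec (w i) (w i))]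
    simp [not_lt]
  -- the key trace computation
  have key : ∀ (S : Finset (Fin n)),
      trace ((∑ i ∈ S, α i • vecMulVec (w i) (w i))ᵀ * (∑ i ∈ S, α i • vecMulVec (w i) (w i)))
      = ∑ i ∈ S, α i ^ 2 := by
    intro S
    rw [transpose_sum, Finset.sum_mul_sum]
    rw [trace_sum]
    have : ∀ i ∈ S, trace (∑ j ∈ S, (α i • vecMulVec (w i) (w i))ᵀ * (α j • vecMulVec (w j) (w j)))
        = α i ^ 2 := by
      intro i hi
      rw [trace_sum]
      have hterm : ∀ j, trace ((α i • vecMulVec (w i) (w i))ᵀ * (α j • vecMulVec (w j) (w j)))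
          = α i * α j * ((if i = j then (1:ℝ) else 0) * (if i = j then (1:ℝ) else 0)) := by
        intro j
        rw [transpose_smul, smul_mul_assoc, mul_smul_comm, trace_smul, trace_smul,
          EYhelp.trace_vmv, hortho]
        simp only [smul_eq_mul]; ring
      rw [Finset.sum_congr rfl fun j _ => hterm j]
      rw [Finset.sum_eq_single i]
      · simp [pow_two]
      · intro j _ hj; simp [Ne.symm hj, (fun h => hj h.symm : ¬ i = j)]
      · intro h; exact absurd hi h
    rw [Finset.sum_congr rfl this]
  have htr : Matrix.trace ((A - B)ᵀ * (A - B)) =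
      ∑ i ∈ Finset.univ.filter (fun i : Fin n => m ≤ (i : ℕ)), (α i) ^ 2 := by
    rw [hAmB, key]
  refine ⟨?_, htr, ?_⟩
  · -- rank bound
    set X : Matrix (Fin n) (Fin m) ℝ :=
      Matrix.of (fun i j => α (Fin.castLE hmn j) * w (Fin.castLE hmn j) i) with hXdef
    set Y : Matrix (Fin m) (Fin n) ℝ := Matrix.of (fun j i => w (Fin.castLE hmn j) i) with hYdef
    have hBXY : B = X * Y := by
      rw [hB, EYhelp.filter_lt_eq_image hmn,
        Finset.sum_image (fun a _ b _ h => Fin.castLE_injective hmn h)]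
      ext i k
      simp only [Matrix.sum_apply, Matrix.smul_apply, vecMulVec_apply, smul_eq_mul,
        mul_apply, X, Y, of_apply]
      exact Finset.sum_congr rfl fun j _ => by ring
    calc B.rank = (X * Y).rank := by rw [hBXY]
    _ ≤ X.rank := rank_mul_le_left X Y
    _ ≤ Fintype.card (Fin m) := X.rank_le_card_width
    _ = m := Fintype.card_fin m
  · -- minimality
    intro C hC
    obtain ⟨x, hxortho, hxker⟩ := EYhelp.exists_ker hmn C hC
    have hcol : ∀ l r, ∑ i, w i l * w i r = if l = r then (1:ℝ) else 0 := by
      intro l r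
      have := congrFun (congrFun hWtW l) r
      simpa [mul_apply, one_apply, transpose_apply, W] using this
    have hα0 : ∀ i, 0 ≤ α i := by
      intro i
      have h := hA.dotProduct_mulVec_nonneg (w i)
      rw [heig i] at h
      simpa [dotProduct_smul, hortho i i] using h
    have hβ : Antitone fun i : Fin n => α i ^ 2 := fun i j hij =>
      pow_le_pow_left₀ (hα0 j) (hα hij) 2
    set c : Fin n → ℝ := fun i => ∑ j, (w i ⬝ᵥ x j) ^ 2 with hc
    have hc0 : ∀ i, 0 ≤ c i := fun i => Finset.sum_nonneg fun j _ => sq_nonneg _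
    have hc1 : ∀ i, c i ≤ 1 := fun i => by
      simpa [hortho i i] using EYhelp.bessel x hxortho (w i)
    have hcsum : ∑ i, c i = ((n - m : ℕ) : ℝ) := by
      rw [hc]
      rw [Finset.sum_comm]
      rw [Finset.sum_congr rfl fun j _ => by
        rw [EYhelp.parseval w hcol (x j), hxortho j j]]
      simp
    have hmaj := EYhelp.majorize hmn (fun i => α i ^ 2) hβ (fun i => sq_nonneg _) c hc0 hc1 hcsum
    have hAx : ∀ j, ((A - C) *ᵥ x j) ⬝ᵥ ((A - C) *ᵥ x j) = ∑ i, α i ^ 2 * (w i ⬝ᵥ x j) ^ 2 := by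
      intro j
      have h1 : (A - C) *ᵥ x j = A *ᵥ x j := by rw [Matrix.sub_mulVec, hxker j, sub_zero]
      have h2 : A *ᵥ x j = ∑ i, (α i * (w i ⬝ᵥ x j)) • w i := by
        conv_lhs => rw [hspec]
        rw [EYhelp.sum_mulVec']
        refine Finset.sum_congr rfl fun i _ => ?_
        rw [Matrix.smul_mulVec, EYhelp.vmv_mulVec, smul_smul]
      rw [h1, h2, EYhelp.dp_expand w hortho]
      exact Finset.sum_congr rfl fun i _ => by ring
    have hsum2 : ∑ i, α i ^ 2 * c i = ∑ j, ((A - C) *ᵥ x j) ⬝ᵥ ((A - C) *ᵥ x j) := by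
      rw [Finset.sum_congr rfl fun j _ => hAx j]
      simp only [hc, Finset.mul_sum]
      exact Finset.sum_comm
    have hfinal := EYhelp.trace_lower (A - C) x hxortho
    rw [htr]
    linarith [hmaj, hsum2 ▸ hfinal]
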